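/- For a Boolean formula φ over n variables, the reduction decision problem (with actions {accept, reject}, states being either a distinguished reference state or an assignment a ∈ {0,1}^n, utilities U(accept, reference)=1, U(reject, reference)=0, U(accept, a)=φ(a) (interpreted as 0 or 1), U(reject, a)=0) satisfies: the empty coordinate set is sufficient if and only if φ is a tautology. -/
import Mathlib


/-- The set of optimal actions at state `s`. -/
def Opt {A : Type} [Fintype A] {S : Type} (U : A → S → ℚ) (s : S) : Set A :=
  {a | ∀ b, U b s ≤ U a s}

/-- A coordinate set `I` is sufficient if states agreeing on `I` have equal optimal sets. -/
def Sufficient {A : Type} [Fintype A] {n : ℕ} {X : Fin n → Type}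
    (U : A → (∀ i, X i) → ℚ) (I : Finset (Fin n)) : Prop :=
  ∀ s s' : ∀ i, X i, (∀ i ∈ I, s i = s' i) → Opt U s = Opt U s'

/-- Coordinate `i` is relevant if two states differing only at `i` have different optimal sets. -/
def Relevant {A : Type} [Fintype A] {n : ℕ} {X : Fin n → Type}
    (U : A → (∀ i, X i) → ℚ) (i : Fin n) : Prop :=
  ∃ s s' : ∀ j, X j, (∀ j, j ≠ i → s j = s' j) ∧ Opt U s ≠ Opt U s'

/-- Utility of the TAUTOLOGY reduction: states are `none` (the reference state) or
`some a` for an assignment `a`; action `true` is accept, `false` is reject. -/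
def reductionU {n : ℕ} (φ : (Fin n → Bool) → Bool) :
    Bool → Option (Fin n → Bool) → ℚ := fun b s =>
  if b then (match s with
    | none => 1
    | some a => if φ a then 1 else 0)
  else 0

theorem tautology_iff_empty_sufficient {n : ℕ} (φ : (Fin n → Bool) → Bool) :
    (∀ s s' : Option (Fin n → Bool), Opt (reductionU φ) s = Opt (reductionU φ) s')
      ↔ (∀ a : Fin n → Bool, φ a = true) := by
  constructor
  · intro h a
    by_contra hfa
    have hfa' : φ a = false := by simpa using hfa
    have heq := h (some a) none
    have hmem : false ∈ Opt (reductionU φ) (some a) := by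
      intro b
      cases b <;> simp [reductionU, Opt, hfa']
    rw [heq] at hmem
    have := hmem true
    simp [reductionU, Opt] at this
    linarith
  · intro h s s'
    have key : ∀ t : Option (Fin n → Bool), Opt (reductionU φ) t = {true} := by
      intro t
      ext b
      simp only [Opt, Set.mem_setOf_eq, Set.mem_singleton_iff]
      constructor
      · intro hb
        cases b with
        | true => rfl
        | false =>
          exfalso
          have := hb true
          cases t with
          | none => simp [reductionU] at this; linarith
          | some a => simp [reductionU, h a] at this; linarith
      · intro hb c
        subst hb
        cases c <;> cases t <;> simp [reductionU, h]
    rw [key s, key s']
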